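/- For every ε > 0, m > 0, and each fixed μ ∈ ℤ₊, the series Σ_{λ=1}^∞ b₁(λ,μ,m,ε) converges to (−1)^(μ+1)·(1+√(m²ε²+1))/(mε), and the series Σ_{λ=1}^∞ b₂(λ,μ,m,ε) converges to (−1)^μ·(2+m²ε²+2√(m²ε²+1))/(m²ε²). -/

import Mathlib

noncomputable section

/-- The `i`-th move of a checker path encoded as `f : Fin n → Bool`
(`true` = upwards-right move `(ε,ε)`, `false` = upwards-left move `(−ε,ε)`);
out-of-range indices default to `true`. -/
def fcStep {n : ℕ} (f : Fin n → Bool) (i : ℕ) : Bool :=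
  if h : i < n then f ⟨i, h⟩ else true

/-- The number of turns of the checker path `f`. -/
def fcTurns {n : ℕ} (f : Fin n → Bool) : ℕ :=
  ((Finset.range (n - 1)).filter fun i => fcStep f i ≠ fcStep f (i + 1)).card

/-- The position (in units of `ε`) of the checker path `f` after `i` moves,
starting from the origin. -/
def fcPos {n : ℕ} (f : Fin n → Bool) (i : ℕ) : ℤ :=
  ∑ j ∈ Finset.range i, (if fcStep f j then (1 : ℤ) else -1)

/-- Checker paths from `(0,0)` to `(εx, εn)` whose first step is to `(ε,ε)`. -/
def fcPaths (n : ℕ) (x : ℤ) : Finset (Fin n → Bool) :=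
  Finset.univ.filter fun f =>
    (∀ i : Fin n, (i : ℕ) = 0 → f i = true) ∧ fcPos f n = x

/-- The amplitude `a(εx, εn, m, ε)`. -/
def fcAmp (m ε : ℝ) (x : ℤ) (n : ℕ) : ℂ :=
  (((1 + m ^ 2 * ε ^ 2) ^ ((1 - (n : ℝ)) / 2) : ℝ) : ℂ) * Complex.I *
    ∑ f ∈ fcPaths n x, (-Complex.I * (m * ε)) ^ fcTurns f

/-- The probability `P(εx, εn, m, ε)` to find the electron at `(εx, εn)`. -/
def fcP (m ε : ℝ) (x : ℤ) (n : ℕ) : ℝ := ‖fcAmp m ε x n‖ ^ 2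

/-- `b(λ,μ,m,ε) := a(ε(λ−μ), ε(λ+μ), m, ε)`. -/
def fcB (m ε : ℝ) (lam mu : ℕ) : ℂ := fcAmp m ε ((lam : ℤ) - (mu : ℤ)) (lam + mu)

lemma fcStep_apply {n : ℕ} (f : Fin n → Bool) (i : Fin n) : fcStep f i = f i := by
  simp [fcStep, i.isLt, Fin.eta]

lemma mem_fcPaths {n : ℕ} {x : ℤ} {f : Fin n → Bool} :
    f ∈ fcPaths n x ↔ ((0 < n → fcStep f 0 = true) ∧ fcPos f n = x) := by
  simp only [fcPaths, Finset.mem_filter, Finset.mem_univ, true_and]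
  constructor
  · rintro ⟨h1, h2⟩
    refine ⟨fun hn => ?_, h2⟩
    have := h1 ⟨0, hn⟩ rfl
    rw [fcStep, dif_pos hn]
    exact this
  · rintro ⟨h1, h2⟩
    refine ⟨fun i hi => ?_, h2⟩
    have := h1 (lt_of_le_of_lt (Nat.zero_le _) i.isLt)
    rw [fcStep] at this
    rw [dif_pos (show (0:ℕ) < n from lt_of_le_of_lt (Nat.zero_le _) i.isLt)] at this
    rwa [show i = (⟨0, lt_of_le_of_lt (Nat.zero_le _) i.isLt⟩ : Fin n) from Fin.ext hi]

lemma fcStep_snoc {n : ℕ} (f : Fin n → Bool) (b : Bool) (j : ℕ) :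
    fcStep (Fin.snoc f b) j = if j = n then b else fcStep f j := by
  rcases lt_trichotomy j n with h | h | h
  · rw [fcStep, fcStep, dif_pos (Nat.lt_succ_of_lt h), dif_pos h, if_neg h.ne]
    have : (⟨j, Nat.lt_succ_of_lt h⟩ : Fin (n+1)) = Fin.castSucc ⟨j, h⟩ := rfl
    rw [this, Fin.snoc_castSucc]
  · subst h
    rw [fcStep, dif_pos (Nat.lt_succ_self j), if_pos rfl]
    have : (⟨j, Nat.lt_succ_self j⟩ : Fin (j+1)) = Fin.last j := rfl
    rw [this, Fin.snoc_last]
  · rw [fcStep, fcStep, dif_neg (by omega), dif_neg (by omega), if_neg (by omega)]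

lemma fcPos_snoc_le {n : ℕ} (f : Fin n → Bool) (b : Bool) {i : ℕ} (hi : i ≤ n) :
    fcPos (Fin.snoc f b) i = fcPos f i := by
  unfold fcPos
  refine Finset.sum_congr rfl fun j hj => ?_
  rw [Finset.mem_range] at hj
  rw [fcStep_snoc, if_neg (by omega : ¬ j = n)]

lemma fcPos_snoc {n : ℕ} (f : Fin n → Bool) (b : Bool) :
    fcPos (Fin.snoc f b) (n + 1) = fcPos f n + (if b then 1 else -1) := by
  unfold fcPos
  rw [Finset.sum_range_succ, fcStep_snoc, if_pos rfl]
  congr 1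
  exact Finset.sum_congr rfl fun j hj => by
    rw [Finset.mem_range] at hj; rw [fcStep_snoc, if_neg hj.ne]

lemma fcTurns_snoc {n : ℕ} (hn : 1 ≤ n) (f : Fin n → Bool) (b : Bool) :
    fcTurns (Fin.snoc f b) = fcTurns f + (if fcStep f (n-1) = b then 0 else 1) := by
  unfold fcTurns
  have h1 : (n + 1) - 1 = (n - 1) + 1 := by omega
  rw [h1, Finset.range_add_one, Finset.filter_insert]
  have hmem : ∀ i ∈ Finset.range (n-1),
      (fcStep (Fin.snoc f b) i ≠ fcStep (Fin.snoc f b) (i+1)) ↔ (fcStep f i ≠ fcStep f (i+1)) := by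
    intro i hi
    rw [Finset.mem_range] at hi
    rw [fcStep_snoc, fcStep_snoc, if_neg (by omega), if_neg (by omega)]
  rw [Finset.filter_congr hmem]
  have hlast : fcStep (Fin.snoc f b) (n-1) = fcStep f (n-1) := by
    rw [fcStep_snoc, if_neg (by omega)]
  have hlast2 : fcStep (Fin.snoc f b) ((n-1)+1) = b := by
    rw [fcStep_snoc, if_pos (by omega)]
  by_cases hb : fcStep f (n-1) = b
  · rw [if_neg (by rw [hlast, hlast2]; simp [hb]), if_pos hb, Nat.add_zero]
  · rw [if_pos (by rw [hlast, hlast2]; simp [hb]), if_neg hb,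
      Finset.card_insert_of_notMem (by simp)]

def fcS (z : ℂ) (n : ℕ) (x : ℤ) (b : Bool) : ℂ :=
  ∑ f ∈ (fcPaths n x).filter (fun f => fcStep f (n-1) = b), z ^ fcTurns f

lemma fcS_split (z : ℂ) (n : ℕ) (x : ℤ) :
    ∑ f ∈ fcPaths n x, z ^ fcTurns f = fcS z n x true + fcS z n x false := by
  rw [fcS, fcS, ← Finset.sum_filter_add_sum_filter_not (fcPaths n x)
    (fun f => fcStep f (n-1) = true)]
  congr 1
  apply Finset.sum_congr _ (fun _ _ => rfl)
  apply Finset.filter_congr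
  intro f _
  simp

lemma snoc_mem_fcPaths {n : ℕ} (hn : 1 ≤ n) (f : Fin n → Bool) (b : Bool) (x : ℤ) :
    Fin.snoc f b ∈ fcPaths (n+1) x ↔ f ∈ fcPaths n (x - (if b then 1 else -1)) := by
  rw [mem_fcPaths, mem_fcPaths]
  constructor
  · rintro ⟨h1, h2⟩
    refine ⟨fun _ => ?_, ?_⟩
    · have := h1 (by omega)
      rwa [fcStep_snoc, if_neg (by omega)] at this
    · rw [fcPos_snoc] at h2; omega
  · rintro ⟨h1, h2⟩
    refine ⟨fun _ => ?_, ?_⟩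
    · rw [fcStep_snoc, if_neg (by omega)]; exact h1 (by omega)
    · rw [fcPos_snoc, h2]; ring

lemma fcS_succ (z : ℂ) {n : ℕ} (hn : 1 ≤ n) (x : ℤ) (b : Bool) :
    fcS z (n+1) x b = fcS z n (x - (if b then 1 else -1)) b
      + z * fcS z n (x - (if b then 1 else -1)) (!b) := by
  set x' := x - (if b then 1 else -1) with hx'
  have key : fcS z (n+1) x b
      = ∑ f ∈ fcPaths n x', z ^ (fcTurns f + if fcStep f (n-1) = b then 0 else 1) := by
    rw [fcS]
    symm
    apply Finset.sum_bij (fun (f : Fin n → Bool) (_ : f ∈ fcPaths n x') => (Fin.snoc f b : Fin (n+1) → Bool))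
    · intro f hf
      rw [Finset.mem_filter]
      refine ⟨(snoc_mem_fcPaths hn f b x).2 hf, ?_⟩
      rw [show n + 1 - 1 = n from rfl, fcStep_snoc, if_pos rfl]
    · intro f1 h1 f2 h2 heq
      have := congrArg Fin.init heq
      rwa [Fin.init_snoc, Fin.init_snoc] at this
    · intro g hg
      rw [Finset.mem_filter] at hg
      obtain ⟨hg1, hg2⟩ := hg
      have hlast : g (Fin.last n) = b := by
        rw [show n + 1 - 1 = n from rfl] at hg2
        rw [fcStep, dif_pos (Nat.lt_succ_self n)] at hg2
        exact hg2
        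
      refine ⟨Fin.init g, ?_, ?_⟩
      · rw [← snoc_mem_fcPaths hn (Fin.init g) b x, ← hlast, Fin.snoc_init_self]
        exact hg1
      · rw [← hlast, Fin.snoc_init_self]
    · intro f hf
      rw [fcTurns_snoc hn f b]
  rw [key, ← Finset.sum_filter_add_sum_filter_not (fcPaths n x')
    (fun f => fcStep f (n-1) = b), fcS, fcS]
  congr 1
  · apply Finset.sum_congr rfl
    intro f hf
    rw [Finset.mem_filter] at hf
    rw [if_pos hf.2, Nat.add_zero]
  · rw [Finset.mul_sum]
    apply Finset.sum_congr
    · apply Finset.filter_congr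
      intro f _
      cases b <;> cases (fcStep f (n-1)) <;> simp
    · intro f hf
      rw [Finset.mem_filter] at hf
      rw [if_neg (by cases b <;> cases h : fcStep f (n-1) <;> simp_all), pow_succ]
      ring

lemma fcStep_const_true {n : ℕ} (i : ℕ) : fcStep (fun _ : Fin n => true) i = true := by
  unfold fcStep; split <;> rfl

lemma fcTurns_const_true {n : ℕ} : fcTurns (fun _ : Fin n => true) = 0 := by
  unfold fcTurns
  rw [Finset.card_eq_zero, Finset.filter_eq_empty_iff]
  intro i _
  simp [fcStep_const_true]

lemma fcPaths_diag (n : ℕ) : fcPaths n (n : ℤ) = {fun _ => true} := by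
  ext f
  rw [mem_fcPaths, Finset.mem_singleton]
  constructor
  · rintro ⟨-, h2⟩
    funext i
    by_contra hne
    have hi : fcStep f i = false := by
      rw [fcStep_apply]
      exact Bool.not_eq_true _ ▸ (by simpa using hne)
    have hlt : fcPos f n < n := by
      unfold fcPos
      calc ∑ j ∈ Finset.range n, (if fcStep f j then (1:ℤ) else -1)
          < ∑ _j ∈ Finset.range n, (1:ℤ) := by
            apply Finset.sum_lt_sum
            · intro j _; split <;> omega
            · exact ⟨i, Finset.mem_range.2 i.isLt, by rw [hi]; norm_num⟩
        _ = n := by simp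
    omega
  · rintro rfl
    refine ⟨fun _ => fcStep_const_true 0, ?_⟩
    unfold fcPos
    simp [fcStep_const_true]

lemma fcPaths_neg {n : ℕ} (hn : 1 ≤ n) : fcPaths n (-(n : ℤ)) = ∅ := by
  rw [Finset.eq_empty_iff_forall_notMem]
  intro f hf
  rw [mem_fcPaths] at hf
  obtain ⟨h1, h2⟩ := hf
  have h0 : fcStep f 0 = true := h1 (by omega)
  obtain ⟨m, rfl⟩ : ∃ m, n = m + 1 := ⟨n - 1, by omega⟩
  have : fcPos f (m+1) ≥ 1 - m := by
    unfold fcPos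
    rw [Finset.sum_range_succ']
    have : ∑ i ∈ Finset.range m, (if fcStep f (i+1) then (1:ℤ) else -1) ≥ -m := by
      calc ∑ i ∈ Finset.range m, (if fcStep f (i+1) then (1:ℤ) else -1)
          ≥ ∑ _i ∈ Finset.range m, (-1:ℤ) := by
            apply Finset.sum_le_sum; intro j _; split <;> omega
        _ = -m := by simp
    rw [h0]
    simp only [if_pos]
    omega
  omega

lemma fcS_diag_true (z : ℂ) (n : ℕ) : fcS z n (n : ℤ) true = 1 := by
  rw [fcS, fcPaths_diag]
  rw [Finset.filter_singleton, if_pos (fcStep_const_true _)]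
  simp [fcTurns_const_true]

lemma fcS_diag_false (z : ℂ) (n : ℕ) : fcS z n (n : ℤ) false = 0 := by
  rw [fcS, fcPaths_diag]
  rw [Finset.filter_singleton, if_neg (by simp [fcStep_const_true])]
  simp

lemma fcS_neg (z : ℂ) {n : ℕ} (hn : 1 ≤ n) (b : Bool) : fcS z n (-(n:ℤ)) b = 0 := by
  rw [fcS, fcPaths_neg hn]
  simp

def fcZ (m ε : ℝ) : ℂ := -Complex.I * (m * ε)
def fcK (m ε : ℝ) (n : ℕ) : ℝ := (1 + m ^ 2 * ε ^ 2) ^ ((1 - (n : ℝ)) / 2)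
def fcQ (m ε : ℝ) : ℝ := (Real.sqrt (m ^ 2 * ε ^ 2 + 1))⁻¹
def fcU (m ε : ℝ) (mu lam : ℕ) : ℂ :=
  (fcK m ε (lam + mu) : ℂ) * fcS (fcZ m ε) (lam + mu) ((lam : ℤ) - (mu : ℤ)) true
def fcV (m ε : ℝ) (mu lam : ℕ) : ℂ :=
  (fcK m ε (lam + mu) : ℂ) * fcS (fcZ m ε) (lam + mu) ((lam : ℤ) - (mu : ℤ)) false

lemma fcB_eq (m ε : ℝ) (lam mu : ℕ) :
    fcB m ε lam mu = Complex.I * (fcU m ε mu lam + fcV m ε mu lam) := by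
  rw [fcB, fcAmp]
  rw [show (fun f => (-Complex.I * (↑m * ↑ε)) ^ fcTurns f) = fun f => (fcZ m ε) ^ fcTurns f from rfl]
  rw [fcS_split]
  unfold fcU fcV fcK
  ring

lemma fcK_succ (m ε : ℝ) (n : ℕ) : fcK m ε (n + 1) = fcK m ε n * fcQ m ε := by
  unfold fcK fcQ
  rw [show (1 - ((n + 1 : ℕ) : ℝ)) / 2 = (1 - (n : ℝ)) / 2 + (-(1 / 2)) by push_cast; ring]
  rw [Real.rpow_add (by positivity)]
  congr 1
  rw [Real.rpow_neg (by positivity), show m ^ 2 * ε ^ 2 + 1 = 1 + m ^ 2 * ε ^ 2 by ring,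
    Real.sqrt_eq_rpow]

lemma fcK_one (m ε : ℝ) : fcK m ε 1 = 1 := by
  unfold fcK
  rw [show (1 - ((1 : ℕ) : ℝ)) / 2 = 0 by norm_num, Real.rpow_zero]

lemma fcK_geom (m ε : ℝ) (k : ℕ) : fcK m ε (k + 1) = fcQ m ε ^ k := by
  induction k with
  | zero => simpa using fcK_one m ε
  | succ k ih => rw [fcK_succ, ih, pow_succ]

lemma fcU_succ (m ε : ℝ) (mu lam : ℕ) (h : 1 ≤ lam + mu) :
    fcU m ε mu (lam + 1) = (fcQ m ε : ℂ) * (fcU m ε mu lam + fcZ m ε * fcV m ε mu lam) := by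
  unfold fcU fcV
  have hidx : lam + 1 + mu = (lam + mu) + 1 := by omega
  rw [hidx, fcK_succ]
  have hs := fcS_succ (fcZ m ε) (n := lam + mu) h (((lam + 1 : ℕ) : ℤ) - (mu : ℤ)) true
  norm_num at hs
  rw [show ((lam : ℤ) + 1 - (mu : ℤ)) - 1 = (lam : ℤ) - mu by ring] at hs
  push_cast
  rw [hs]
  ring

lemma fcV_succ (m ε : ℝ) (mu lam : ℕ) (h : 1 ≤ lam + mu) :
    fcV m ε (mu + 1) lam = (fcQ m ε : ℂ) * (fcV m ε mu lam + fcZ m ε * fcU m ε mu lam) := by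
  unfold fcU fcV
  have hidx : lam + (mu + 1) = (lam + mu) + 1 := by omega
  rw [hidx, fcK_succ]
  have hs := fcS_succ (fcZ m ε) (n := lam + mu) h ((lam : ℤ) - ((mu + 1 : ℕ) : ℤ)) false
  norm_num at hs
  rw [show ((lam : ℤ) - ((mu : ℤ) + 1)) + 1 = (lam : ℤ) - mu by ring] at hs
  push_cast
  rw [hs]
  ring

lemma fcU_zero (m ε : ℝ) (mu : ℕ) (hmu : 1 ≤ mu) : fcU m ε mu 0 = 0 := by
  unfold fcU
  rw [show ((0 : ℕ) : ℤ) - (mu : ℤ) = -(((0 + mu : ℕ) : ℤ)) by push_cast; ring,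
    fcS_neg _ (by omega), mul_zero]

lemma fcV_zero (m ε : ℝ) (mu : ℕ) (hmu : 1 ≤ mu) : fcV m ε mu 0 = 0 := by
  unfold fcV
  rw [show ((0 : ℕ) : ℤ) - (mu : ℤ) = -(((0 + mu : ℕ) : ℤ)) by push_cast; ring,
    fcS_neg _ (by omega), mul_zero]

lemma fcU_base (m ε : ℝ) (lam : ℕ) : fcU m ε 0 lam = (fcK m ε lam : ℂ) := by
  unfold fcU
  rw [show ((lam : ℕ) : ℤ) - ((0 : ℕ) : ℤ) = (((lam + 0 : ℕ) : ℤ)) by push_cast; ring,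
    fcS_diag_true, mul_one]
  norm_num

lemma fcV_base (m ε : ℝ) (lam : ℕ) : fcV m ε 0 lam = 0 := by
  unfold fcV
  rw [show ((lam : ℕ) : ℤ) - ((0 : ℕ) : ℤ) = (((lam + 0 : ℕ) : ℤ)) by push_cast; ring,
    fcS_diag_false, mul_zero]

open Complex in
lemma fcAlg1 (s a : ℝ) (hs2 : s^2 = a^2+1) (hs1 : 1 < s) (ha : 0 < a) :
    ((s⁻¹ : ℝ) : ℂ) * (-I * a) * (1 - ((s⁻¹ : ℝ) : ℂ))⁻¹
      = (-1 : ℂ)^1 * I * (((s+1)/a : ℝ) : ℂ) := by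
  have haC : (a:ℂ) ≠ 0 := by exact_mod_cast ha.ne'
  have hs0 : (s:ℂ) ≠ 0 := by exact_mod_cast (by positivity : (0:ℝ) < s).ne'
  have h1q : ((s:ℂ) - 1) ≠ 0 := by
    have : (s:ℝ) - 1 ≠ 0 := by nlinarith
    exact_mod_cast fun h => this (by exact_mod_cast h)
  have hS2 : ((s:ℂ))^2 = (a:ℂ)^2 + 1 := by exact_mod_cast congrArg (fun x : ℝ => (x:ℂ)) hs2
  push_cast
  rw [show (1 - ((s:ℂ))⁻¹) = ((s:ℂ) - 1)/(s:ℂ) by field_simp]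
  field_simp
  ring_nf
  linear_combination hS2

open Complex in
lemma fcAlg2 (s a : ℝ) (hs2 : s^2 = a^2+1) (hs1 : 1 < s) (ha : 0 < a) (mu : ℕ) :
    (-I * (a:ℂ)) * ((s⁻¹:ℝ):ℂ) * ((((-1:ℂ))^mu * I * (((s+1)/a : ℝ):ℂ)) * (1 - ((s⁻¹:ℝ):ℂ))⁻¹)
      = (-1:ℂ)^mu * (((s+1)^2/a^2 : ℝ):ℂ) := by
  have haC : (a:ℂ) ≠ 0 := by exact_mod_cast ha.ne'
  have hs0 : (s:ℂ) ≠ 0 := by exact_mod_cast (by positivity : (0:ℝ) < s).ne'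
  have h1q : ((s:ℂ) - 1) ≠ 0 := by
    have : (s:ℝ) - 1 ≠ 0 := by nlinarith
    exact_mod_cast fun h => this (by exact_mod_cast h)
  have hS2 : ((s:ℂ))^2 = (a:ℂ)^2 + 1 := by exact_mod_cast congrArg (fun x : ℝ => (x:ℂ)) hs2
  push_cast
  rw [show (1 - ((s:ℂ))⁻¹) = ((s:ℂ) - 1)/(s:ℂ) by field_simp]
  field_simp
  ring_nf
  linear_combination (-((a:ℂ)^2*((s:ℂ)+1))) * Complex.I_sq
    + (-((s:ℂ)+1)) * hS2

open Complex in
lemma fcAlg3 (s a : ℝ) (hs2 : s^2 = a^2+1) (hs1 : 1 < s) (ha : 0 < a) (mu : ℕ) :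
    ((s⁻¹:ℝ):ℂ) * ((((-1:ℂ))^mu * I * (((s+1)/a : ℝ):ℂ))
        + (-I * (a:ℂ)) * ((-1:ℂ)^mu * (((s+1)^2/a^2 : ℝ):ℂ)))
      = (-1:ℂ)^(mu+1) * I * (((s+1)/a : ℝ):ℂ) := by
  have haC : (a:ℂ) ≠ 0 := by exact_mod_cast ha.ne'
  have hs0 : (s:ℂ) ≠ 0 := by exact_mod_cast (by positivity : (0:ℝ) < s).ne'
  have hS2 : ((s:ℂ))^2 = (a:ℂ)^2 + 1 := by exact_mod_cast congrArg (fun x : ℝ => (x:ℂ)) hs2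
  push_cast
  field_simp
  ring_nf

open Complex in
lemma fcAlg4 (s a : ℝ) (hs2 : s^2 = a^2+1) (hs1 : 1 < s) (ha : 0 < a) (mu : ℕ) :
    I * ((-1:ℂ)^mu * (((s+1)^2/a^2 : ℝ):ℂ) + (-1:ℂ)^mu * I * (((s+1)/a : ℝ):ℂ))
      = (((-1:ℝ)^(mu+1) * ((1+s)/a) : ℝ):ℂ) + (((-1:ℝ)^mu * ((2+a^2+2*s)/a^2) : ℝ):ℂ) * I := by
  have haC : (a:ℂ) ≠ 0 := by exact_mod_cast ha.ne'
  have hS2 : ((s:ℂ))^2 = (a:ℂ)^2 + 1 := by exact_mod_cast congrArg (fun x : ℝ => (x:ℂ)) hs2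
  push_cast
  field_simp
  ring_nf
  linear_combination ((-1:ℂ)^mu*(a:ℂ)*((s:ℂ)+1)) * Complex.I_sq
    + (I*(-1:ℂ)^mu) * hS2

lemma hasSum_zero_head {f : ℕ → ℂ} {S : ℂ} (h0 : f 0 = 0)
    (h : HasSum (fun k => f (k+1)) S) : HasSum f S := by
  have := (hasSum_nat_add_iff (f := f) 1).1 h
  simpa [h0] using this

lemma hasSum_tail {f : ℕ → ℂ} {S : ℂ} (h0 : f 0 = 0) (h : HasSum f S) :
    HasSum (fun k => f (k+1)) S := by
  refine (hasSum_nat_add_iff (f := f) 1).2 ?_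
  simpa [h0] using h

lemma summable_norm_head {f : ℕ → ℂ} (h : Summable fun k => ‖f (k+1)‖) :
    Summable fun k => ‖f k‖ :=
  (summable_nat_add_iff (f := fun k => ‖f k‖) 1).1 h

section analysis
variable {m ε : ℝ}

lemma fcQ_nonneg : 0 ≤ fcQ m ε := by unfold fcQ; positivity

lemma fcSqrt_gt_one (hε : 0 < ε) (hm : 0 < m) : 1 < Real.sqrt (m^2*ε^2+1) := by
  have h1 : (1:ℝ) < m^2*ε^2+1 := by nlinarith [mul_pos (mul_pos hm hm) (mul_pos hε hε)]
  nlinarith [Real.sq_sqrt (show (0:ℝ) ≤ m^2*ε^2+1 by positivity),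
    Real.sqrt_nonneg (m^2*ε^2+1)]

lemma fcQ_lt_one (hε : 0 < ε) (hm : 0 < m) : fcQ m ε < 1 := by
  unfold fcQ
  rw [inv_lt_one_iff₀]
  right
  exact fcSqrt_gt_one hε hm

lemma fcQnorm (hε : 0 < ε) (hm : 0 < m) : ‖((fcQ m ε : ℝ) : ℂ)‖ < 1 := by
  rw [Complex.norm_real, Real.norm_eq_abs, abs_of_nonneg fcQ_nonneg]
  exact fcQ_lt_one hε hm

lemma fcGeo (hε : 0 < ε) (hm : 0 < m) :
    HasSum (fun k => ((fcQ m ε : ℝ) : ℂ)^k) ((1 - ((fcQ m ε : ℝ) : ℂ))⁻¹) :=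
  hasSum_geometric_of_norm_lt_one (fcQnorm hε hm)

lemma fcGeoNorm (hε : 0 < ε) (hm : 0 < m) :
    Summable (fun k => ‖((fcQ m ε : ℝ) : ℂ)^k‖) := by
  have : (fun k => ‖((fcQ m ε : ℝ) : ℂ)^k‖) = fun k => (fcQ m ε)^k := by
    funext k
    rw [norm_pow, Complex.norm_real, Real.norm_eq_abs, abs_of_nonneg fcQ_nonneg]
  rw [this]
  exact summable_geometric_of_lt_one fcQ_nonneg (fcQ_lt_one hε hm)

lemma fcU_step (hε : 0 < ε) (hm : 0 < m) (mu : ℕ) (hmu : 1 ≤ mu) {SV : ℂ}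
    (hV : HasSum (fcV m ε mu) SV) (hVn : Summable fun l => ‖fcV m ε mu l‖) :
    HasSum (fcU m ε mu)
      ((fcZ m ε * ((fcQ m ε : ℝ) : ℂ)) * (SV * (1 - ((fcQ m ε : ℝ) : ℂ))⁻¹)) ∧
      Summable (fun l => ‖fcU m ε mu l‖) := by
  set Q : ℂ := ((fcQ m ε : ℝ) : ℂ) with hQdef
  set w : ℕ → ℂ := fun k => ∑ p ∈ Finset.HasAntidiagonal.antidiagonal k, fcV m ε mu p.1 * Q^p.2 with hwdef
  have hform : ∀ lam, fcU m ε mu (lam+1) = (fcZ m ε * Q) * w lam := by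
    intro lam
    induction lam with
    | zero =>
      rw [fcU_succ m ε mu 0 (by omega), fcU_zero m ε mu hmu]
      simp only [hwdef, Finset.Nat.antidiagonal_zero, Finset.sum_singleton, pow_zero, mul_one]
      ring
    | succ lam ih =>
      rw [fcU_succ m ε mu (lam+1) (by omega), ih]
      have hw : w (lam+1) = fcV m ε mu (lam+1) + Q * w lam := by
        simp only [hwdef, Finset.Nat.sum_antidiagonal_succ']
        rw [Finset.mul_sum, pow_zero, mul_one]
        congr 1
        apply Finset.sum_congr rfl
        intros p _
        ring
      rw [hw]
      ring
  have hwn : Summable (fun n => ‖w n‖) :=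
    summable_norm_sum_mul_antidiagonal_of_summable_norm hVn (fcGeoNorm hε hm)
  have hwsum : Summable w := hwn.of_norm
  have htsum : (∑' n, fcV m ε mu n) * (∑' n, Q^n) = ∑' n, w n :=
    tsum_mul_tsum_eq_tsum_sum_antidiagonal_of_summable_norm hVn (fcGeoNorm hε hm)
  have hwval : HasSum w (SV * (1 - Q)⁻¹) := by
    have h := hwsum.hasSum
    rwa [← htsum, hV.tsum_eq, (fcGeo hε hm).tsum_eq] at h
  have hU1 : HasSum (fun k => fcU m ε mu (k+1)) ((fcZ m ε * Q) * (SV * (1 - Q)⁻¹)) := by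
    have h2 := hwval.mul_left (fcZ m ε * Q)
    have heq : (fun k => fcU m ε mu (k+1)) = fun k => (fcZ m ε * Q) * w k := funext hform
    rw [heq]
    exact h2
  refine ⟨hasSum_zero_head (fcU_zero m ε mu hmu) hU1, ?_⟩
  apply summable_norm_head (f := fcU m ε mu)
  have heq : (fun k => ‖fcU m ε mu (k+1)‖) = fun k => ‖fcZ m ε * Q‖ * ‖w k‖ := by
    funext k
    rw [hform, norm_mul]
  rw [heq]
  exact hwn.mul_left _

end analysis

def fcSUt (m ε : ℝ) (mu : ℕ) : ℂ :=
  (-1:ℂ)^mu * (((Real.sqrt (m^2*ε^2+1)+1)^2/(m*ε)^2 : ℝ):ℂ)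
def fcSVt (m ε : ℝ) (mu : ℕ) : ℂ :=
  (-1:ℂ)^mu * Complex.I * (((Real.sqrt (m^2*ε^2+1)+1)/(m*ε) : ℝ):ℂ)

theorem fcMain {m ε : ℝ} (hε : 0 < ε) (hm : 0 < m) : ∀ mu : ℕ, 1 ≤ mu →
    (HasSum (fcU m ε mu) (fcSUt m ε mu) ∧ Summable (fun l => ‖fcU m ε mu l‖)) ∧
    (HasSum (fcV m ε mu) (fcSVt m ε mu) ∧ Summable (fun l => ‖fcV m ε mu l‖)) := by
  have hs2 : (Real.sqrt (m^2*ε^2+1))^2 = (m*ε)^2+1 := by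
    rw [Real.sq_sqrt (by positivity)]; ring
  have hs1 : 1 < Real.sqrt (m^2*ε^2+1) := fcSqrt_gt_one hε hm
  have ha : 0 < m*ε := mul_pos hm hε
  have hQc : ((fcQ m ε : ℝ):ℂ) = (((Real.sqrt (m^2*ε^2+1))⁻¹ : ℝ):ℂ) := rfl
  have hZ : fcZ m ε = -Complex.I * (((m*ε : ℝ)):ℂ) := by unfold fcZ; push_cast; ring
  intro mu hmu
  induction mu, hmu using Nat.le_induction with
  | base =>
    -- V part at mu = 1
    have hV1form : ∀ k, fcV m ε 1 (k+1)
        = (((fcQ m ε : ℝ):ℂ) * fcZ m ε) * ((fcQ m ε : ℝ):ℂ)^k := by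
      intro k
      rw [show (1:ℕ) = 0 + 1 from rfl, fcV_succ m ε 0 (k+1) (by omega), fcV_base,
        fcU_base, fcK_geom]
      push_cast
      ring
    have hVhs : HasSum (fcV m ε 1)
        ((((fcQ m ε : ℝ):ℂ) * fcZ m ε) * (1 - ((fcQ m ε : ℝ):ℂ))⁻¹) := by
      apply hasSum_zero_head (fcV_zero m ε 1 le_rfl)
      have h := (fcGeo hε hm).mul_left (((fcQ m ε : ℝ):ℂ) * fcZ m ε)
      have heq : (fun k => fcV m ε 1 (k+1))
          = fun k => (((fcQ m ε : ℝ):ℂ) * fcZ m ε) * ((fcQ m ε : ℝ):ℂ)^k := funext hV1form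
      rw [heq]
      exact h
    have hVval : (((fcQ m ε : ℝ):ℂ) * fcZ m ε) * (1 - ((fcQ m ε : ℝ):ℂ))⁻¹ = fcSVt m ε 1 := by
      rw [hQc, hZ]
      exact fcAlg1 (Real.sqrt (m^2*ε^2+1)) (m*ε) hs2 hs1 ha
    rw [hVval] at hVhs
    have hVn : Summable (fun l => ‖fcV m ε 1 l‖) := by
      apply summable_norm_head (f := fcV m ε 1)
      have heq : (fun k => ‖fcV m ε 1 (k+1)‖)
          = fun k => ‖((fcQ m ε : ℝ):ℂ) * fcZ m ε‖ * ‖((fcQ m ε : ℝ):ℂ)^k‖ := by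
        funext k
        rw [hV1form, norm_mul]
      rw [heq]
      exact (fcGeoNorm hε hm).mul_left _
    -- U part at mu = 1
    obtain ⟨hUhs, hUn⟩ := fcU_step hε hm 1 le_rfl hVhs hVn
    have hUval : (fcZ m ε * ((fcQ m ε : ℝ):ℂ)) * (fcSVt m ε 1 * (1 - ((fcQ m ε : ℝ):ℂ))⁻¹)
        = fcSUt m ε 1 := by
      rw [hQc, hZ]
      exact fcAlg2 (Real.sqrt (m^2*ε^2+1)) (m*ε) hs2 hs1 ha 1
    rw [hUval] at hUhs
    exact ⟨⟨hUhs, hUn⟩, ⟨hVhs, hVn⟩⟩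
  | succ mu hmu ih =>
    obtain ⟨⟨hU, hUn⟩, ⟨hV, hVn⟩⟩ := ih
    have hform : fcV m ε (mu+1)
        = fun lam => ((fcQ m ε : ℝ):ℂ) * (fcV m ε mu lam + fcZ m ε * fcU m ε mu lam) :=
      funext fun lam => fcV_succ m ε mu lam (by omega)
    have hVhs : HasSum (fcV m ε (mu+1)) (fcSVt m ε (mu+1)) := by
      have h := (hV.add (hU.mul_left (fcZ m ε))).mul_left ((fcQ m ε : ℝ):ℂ)
      rw [hform]
      have hval : ((fcQ m ε : ℝ):ℂ) * (fcSVt m ε mu + fcZ m ε * fcSUt m ε mu)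
          = fcSVt m ε (mu+1) := by
        rw [hQc, hZ]
        exact fcAlg3 (Real.sqrt (m^2*ε^2+1)) (m*ε) hs2 hs1 ha mu
      rwa [hval] at h
    have hVn' : Summable (fun l => ‖fcV m ε (mu+1) l‖) := by
      rw [hform]
      refine Summable.of_nonneg_of_le (fun l => norm_nonneg _) ?_
        ((hVn.add (hUn.mul_left ‖fcZ m ε‖)).mul_left ‖((fcQ m ε : ℝ):ℂ)‖)
      intro l
      show ‖((fcQ m ε : ℝ):ℂ) * (fcV m ε mu l + fcZ m ε * fcU m ε mu l)‖ ≤ _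
      rw [norm_mul]
      apply mul_le_mul_of_nonneg_left _ (norm_nonneg _)
      calc ‖fcV m ε mu l + fcZ m ε * fcU m ε mu l‖
          ≤ ‖fcV m ε mu l‖ + ‖fcZ m ε * fcU m ε mu l‖ := norm_add_le _ _
        _ = ‖fcV m ε mu l‖ + ‖fcZ m ε‖ * ‖fcU m ε mu l‖ := by rw [norm_mul]
    obtain ⟨hUhs, hUn'⟩ := fcU_step hε hm (mu+1) (by omega) hVhs hVn'
    have hUval : (fcZ m ε * ((fcQ m ε : ℝ):ℂ)) * (fcSVt m ε (mu+1) * (1 - ((fcQ m ε : ℝ):ℂ))⁻¹)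
        = fcSUt m ε (mu+1) := by
      rw [hQc, hZ]
      exact fcAlg2 (Real.sqrt (m^2*ε^2+1)) (m*ε) hs2 hs1 ha (mu+1)
    rw [hUval] at hUhs
    exact ⟨⟨hUhs, hUn'⟩, ⟨hVhs, hVn'⟩⟩


/-- For fixed `μ ∈ ℤ₊`, the series `Σ_{λ=1}^∞ b₁(λ,μ,m,ε)` and `Σ_{λ=1}^∞ b₂(λ,μ,m,ε)`
converge to `(−1)^(μ+1)(1+√(m²ε²+1))/(mε)` and `(−1)^μ(2+m²ε²+2√(m²ε²+1))/(m²ε²)`. -/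
theorem stmt6 (m ε : ℝ) (hε : 0 < ε) (hm : 0 < m) (mu : ℕ) (hmu : 1 ≤ mu) :
    HasSum (fun k : ℕ => (fcB m ε (k + 1) mu).re)
      ((-1 : ℝ) ^ (mu + 1) * ((1 + Real.sqrt (m ^ 2 * ε ^ 2 + 1)) / (m * ε))) ∧
    HasSum (fun k : ℕ => (fcB m ε (k + 1) mu).im)
      ((-1 : ℝ) ^ mu * ((2 + m ^ 2 * ε ^ 2 + 2 * Real.sqrt (m ^ 2 * ε ^ 2 + 1))
          / (m ^ 2 * ε ^ 2))) := by
  have hs2 : (Real.sqrt (m^2*ε^2+1))^2 = (m*ε)^2+1 := by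
    rw [Real.sq_sqrt (by positivity)]; ring
  have hs1 : 1 < Real.sqrt (m^2*ε^2+1) := fcSqrt_gt_one hε hm
  have ha : 0 < m*ε := mul_pos hm hε
  obtain ⟨⟨hU, hUn⟩, ⟨hV, hVn⟩⟩ := fcMain hε hm mu hmu
  have hUt := hasSum_tail (fcU_zero m ε mu hmu) hU
  have hVt := hasSum_tail (fcV_zero m ε mu hmu) hV
  have hB : HasSum (fun k => fcB m ε (k+1) mu)
      (Complex.I * (fcSUt m ε mu + fcSVt m ε mu)) := by
    have h := (hUt.add hVt).mul_left Complex.I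
    have heq : (fun k => fcB m ε (k+1) mu)
        = fun k => Complex.I * (fcU m ε mu (k+1) + fcV m ε mu (k+1)) :=
      funext fun k => fcB_eq m ε (k+1) mu
    rw [heq]
    exact h
  have hval : Complex.I * (fcSUt m ε mu + fcSVt m ε mu)
      = ((((-1:ℝ)^(mu+1) * ((1+Real.sqrt (m^2*ε^2+1))/(m*ε)) : ℝ)):ℂ)
        + ((((-1:ℝ)^mu * ((2+(m*ε)^2+2*Real.sqrt (m^2*ε^2+1))/(m*ε)^2) : ℝ)):ℂ) * Complex.I := by
    have h := fcAlg4 (Real.sqrt (m^2*ε^2+1)) (m*ε) hs2 hs1 ha mu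
    unfold fcSUt fcSVt
    exact h
  rw [hval] at hB
  have hsplit := (Complex.hasSum_iff _ _).1 hB
  constructor
  · have h1 := hsplit.1
    simp only [Complex.add_re, Complex.ofReal_re, Complex.mul_re, Complex.ofReal_im,
      Complex.I_re, Complex.I_im, mul_zero, zero_mul, mul_one, sub_zero, add_zero,
      zero_sub, neg_zero] at h1
    exact h1
  · have h2 := hsplit.2
    simp only [Complex.add_im, Complex.ofReal_im, Complex.mul_im, Complex.ofReal_re,
      Complex.I_im, Complex.I_re, mul_zero, mul_one, zero_add, add_zero] at h2
    convert h2 using 2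
    ring
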